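/- Let X be a separable reflexive Banach space with property (m_p), p > 1, and suppose there is a sequence of compact operators (Kₙ) with ‖Kₙ‖ ≤ 1, ‖I − Kₙ‖ → 1, and ‖(I − Kₙ)x‖ → 0 for every x ∈ X. Let T be a nonzero bounded operator such that every maximizing sequence for T has norm 1 weak cluster points only (i.e., the minimal weak maximizing limit equals 1). Then ‖T‖ₑ < ‖T‖. -/

import Mathlib

open Filter Topology

/-- Weak convergence of a sequence in a normed space. -/
def WeakTendsto {X : Type*} [NormedAddCommGroup X] [NormedSpace ℝ X]
    (x : ℕ → X) (x₀ : X) : Prop :=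
  ∀ f : X →L[ℝ] ℝ, Tendsto (fun n => f (x n)) atTop (𝓝 (f x₀))

/-- Property (m_p). -/
def PropertyMp {X : Type*} [NormedAddCommGroup X] [NormedSpace ℝ X] (p : ℝ) : Prop :=
  ∀ x : ℕ → X, WeakTendsto x 0 → ∀ y : X,
    limsup (fun n => ‖x n + y‖ ^ p) atTop = limsup (fun n => ‖x n‖ ^ p) atTop + ‖y‖ ^ p

/-- A maximizing sequence for a bounded operator: unit vectors with ‖T xₙ‖ → ‖T‖. -/
def MaximizingSeq {X : Type*} [NormedAddCommGroup X] [NormedSpace ℝ X]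
    (T : X →L[ℝ] X) (x : ℕ → X) : Prop :=
  (∀ n, ‖x n‖ = 1) ∧ Tendsto (fun n => ‖T (x n)‖) atTop (𝓝 ‖T‖)

/-- Weak cluster point of some maximizing sequence for T. -/
def WeakClusterPtOfMaximizing {X : Type*} [NormedAddCommGroup X] [NormedSpace ℝ X]
    (T : X →L[ℝ] X) (x₀ : X) : Prop :=
  ∃ x : ℕ → X, MaximizingSeq T x ∧ ∃ φ : ℕ → ℕ, StrictMono φ ∧ WeakTendsto (x ∘ φ) x₀

/-- The essential norm: distance to the compact operators. -/
noncomputable def essNorm {X : Type*} [NormedAddCommGroup X] [NormedSpace ℝ X]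
    (T : X →L[ℝ] X) : ℝ :=
  sInf {c : ℝ | ∃ K : X →L[ℝ] X, IsCompactOperator K ∧ c = ‖T - K‖}

section Helpers

variable {E : Type*} [NormedAddCommGroup E] [NormedSpace ℝ E]

/-- For any functional there is a near-norming vector. -/
lemma stmt5_exists_half (f : E →L[ℝ] ℝ) : ∃ v : E, ‖v‖ ≤ 1 ∧ ‖f‖ / 2 ≤ f v := by
  rcases eq_or_ne f 0 with rfl | hf
  · exact ⟨0, by simp⟩
  · have h : ‖f‖ / 2 < ‖f‖ := by
      have := norm_pos_iff.mpr hf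
      linarith
    obtain ⟨x, hx1, hx2⟩ := f.exists_lt_apply_of_lt_opNorm h
    rw [Real.norm_eq_abs] at hx2
    rcases le_or_gt 0 (f x) with h0 | h0
    · rw [abs_of_nonneg h0] at hx2
      exact ⟨x, hx1.le, hx2.le⟩
    · refine ⟨-x, by simpa using hx1.le, ?_⟩
      rw [abs_of_neg h0] at hx2
      rw [map_neg]
      linarith

/-- A normed space whose dual is separable is separable. -/
lemma stmt5_separable_of_dual_separable
    [TopologicalSpace.SeparableSpace (E →L[ℝ] ℝ)] :
    TopologicalSpace.SeparableSpace E := by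
  haveI : Nonempty (E →L[ℝ] ℝ) := ⟨0⟩
  set g : ℕ → E →L[ℝ] ℝ := TopologicalSpace.denseSeq _ with hgdef
  have hg : DenseRange g := TopologicalSpace.denseRange_denseSeq _
  choose v hv1 hv2 using fun n => stmt5_exists_half (g n)
  set S : Submodule ℝ E := Submodule.span ℝ (Set.range v) with hSdef
  have hdense : closure (S : Set E) = Set.univ := by
    by_contra hne
    obtain ⟨z, hz⟩ : ∃ z, z ∉ closure (S : Set E) := by
      by_contra h'
      push_neg at h'
      exact hne (Set.eq_univ_of_forall h')
    obtain ⟨f, u, hfu, hfz⟩ :=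
      geometric_hahn_banach_closed_point (S.convex.closure) isClosed_closure hz
    have hf0 : ∀ a ∈ closure (S : Set E), f a = 0 := by
      intro a ha
      by_contra hfa
      have hmem : (u / f a) • a ∈ closure (S : Set E) := by
        have : a ∈ S.topologicalClosure := ha
        exact S.topologicalClosure.smul_mem _ this
      have := hfu _ hmem
      rw [map_smul, smul_eq_mul, div_mul_cancel₀ _ hfa] at this
      exact lt_irrefl _ this
    have hu0 : 0 < u := by
      have h0 : (0 : E) ∈ closure (S : Set E) := subset_closure S.zero_mem
      simpa using hfu 0 h0
    have hfpos : 0 < ‖f‖ := by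
      rcases eq_or_ne f 0 with rfl | hf
      · simp at hfz; linarith
      · exact norm_pos_iff.mpr hf
    obtain ⟨n, hn⟩ := hg.exists_dist_lt f (show (0:ℝ) < ‖f‖/4 by linarith)
    rw [dist_eq_norm] at hn
    have h1 : ‖f‖ - ‖f‖/4 ≤ ‖g n‖ := by
      have := norm_sub_norm_le f (g n)
      linarith [this]
    have h3 : f (v n) = 0 :=
      hf0 (v n) (subset_closure (Submodule.subset_span (Set.mem_range_self n)))
    have h4 : g n (v n) ≤ ‖f‖/4 := by
      have e1 : g n (v n) = (g n - f) (v n) := by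
        rw [ContinuousLinearMap.sub_apply, h3, sub_zero]
      have e2 : (g n - f) (v n) ≤ ‖g n - f‖ * ‖v n‖ := by
        calc (g n - f) (v n) ≤ |(g n - f) (v n)| := le_abs_self _
        _ ≤ ‖g n - f‖ * ‖v n‖ := (g n - f).le_opNorm (v n)
      have e3 : ‖g n - f‖ = ‖f - g n‖ := by rw [norm_sub_rev]
      have e4 : ‖g n - f‖ * ‖v n‖ ≤ ‖g n - f‖ * 1 :=
        mul_le_mul_of_nonneg_left (hv1 n) (norm_nonneg _)
      rw [e1]
      calc (g n - f) (v n) ≤ ‖g n - f‖ * ‖v n‖ := e2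
      _ ≤ ‖g n - f‖ := by linarith [e4]
      _ = ‖f - g n‖ := e3
      _ ≤ ‖f‖/4 := hn.le
    have h5 : ‖g n‖ / 2 ≤ g n (v n) := hv2 n
    linarith
  have hsep : TopologicalSpace.IsSeparable (S : Set E) :=
    TopologicalSpace.IsSeparable.span ((Set.countable_range v).isSeparable)
  have : TopologicalSpace.IsSeparable (Set.univ : Set E) := by
    rw [← hdense]
    exact hsep.closure
  exact TopologicalSpace.isSeparable_univ_iff.mp this

/-- If `v ≤ u` eventually, `v → L`, and `u` is bounded above, then `L ≤ limsup u`. -/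
lemma stmt5_le_limsup {u v : ℕ → ℝ} {L B : ℝ} (h : ∀ᶠ k in atTop, v k ≤ u k)
    (hv : Tendsto v atTop (𝓝 L)) (hB : ∀ k, u k ≤ B) :
    L ≤ limsup u atTop := by
  rw [← hv.limsup_eq]
  exact limsup_le_limsup h hv.isCoboundedUnder_le
    (isBoundedUnder_of ⟨B, fun k => hB k⟩)

/-- If `u ≤ B` eventually and `u` nonneg, then `limsup u ≤ B`. -/
lemma stmt5_limsup_le {u : ℕ → ℝ} {B : ℝ} (h : ∀ᶠ k in atTop, u k ≤ B)
    (h0 : ∀ k, 0 ≤ u k) : limsup u atTop ≤ B :=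
  limsup_le_of_le (IsBoundedUnder.isCoboundedUnder_le
    (isBoundedUnder_of ⟨0, fun k => h0 k⟩ : IsBoundedUnder (· ≥ ·) atTop u)) h

/-- nonneg bounded sequence with `limsup u^p = 0` tends to `0`. -/
lemma stmt5_tendsto_zero_of_limsup_rpow {p : ℝ} (hp : 0 < p) {u : ℕ → ℝ} {B : ℝ}
    (h0 : ∀ k, 0 ≤ u k) (hB : ∀ k, u k ≤ B)
    (h : limsup (fun k => u k ^ p) atTop = 0) :
    Tendsto u atTop (𝓝 0) := by
  have hub : IsBoundedUnder (· ≤ ·) atTop (fun k => u k ^ p) :=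
    isBoundedUnder_of ⟨B ^ p, fun k => Real.rpow_le_rpow (h0 k) (hB k) hp.le⟩
  have hlb : IsBoundedUnder (· ≥ ·) atTop (fun k => u k ^ p) :=
    isBoundedUnder_of ⟨0, fun k => Real.rpow_nonneg (h0 k) p⟩
  have h1 : Tendsto (fun k => u k ^ p) atTop (𝓝 0) :=
    tendsto_of_le_liminf_of_limsup_le
      (le_liminf_of_le hub.isCoboundedUnder_ge
        (Eventually.of_forall fun k => Real.rpow_nonneg (h0 k) p))
      h.le hub hlb
  have h2 : Tendsto (fun k => (u k ^ p) ^ p⁻¹) atTop (𝓝 ((0:ℝ) ^ p⁻¹)) :=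
    h1.rpow_const (Or.inr (by positivity))
  rw [Real.zero_rpow (by positivity)] at h2
  have h3 : ∀ k, (u k ^ p) ^ p⁻¹ = u k := fun k => Real.rpow_rpow_inv (h0 k) hp.ne'
  simpa only [h3] using h2

end Helpers

/-- Weak sequential compactness of the unit ball in a separable reflexive space. -/
lemma stmt5_weak_bw {X : Type*} [NormedAddCommGroup X] [NormedSpace ℝ X] [CompleteSpace X]
    [TopologicalSpace.SeparableSpace (X →L[ℝ] ℝ)]
    (hrefl : Function.Surjective (NormedSpace.inclusionInDoubleDual ℝ X))
    (x : ℕ → X) (hx : ∀ n, ‖x n‖ ≤ 1) :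
    ∃ (φ : ℕ → ℕ) (x₀ : X), StrictMono φ ∧ WeakTendsto (x ∘ φ) x₀ := by
  haveI : Nonempty (X →L[ℝ] ℝ) := ⟨0⟩
  set g : ℕ → X →L[ℝ] ℝ := TopologicalSpace.denseSeq _ with hgdef
  have hg : DenseRange g := TopologicalSpace.denseRange_denseSeq _
  set S : Set (ℕ → ℝ) := Set.pi Set.univ (fun m => Set.Icc (-‖g m‖) ‖g m‖) with hSdef
  have hS : IsSeqCompact S :=
    (isCompact_univ_pi fun m => isCompact_Icc).isSeqCompact
  have hmem : ∀ n, (fun m => g m (x n)) ∈ S := by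
    intro n m _
    have h1 : |g m (x n)| ≤ ‖g m‖ := by
      calc |g m (x n)| ≤ ‖g m‖ * ‖x n‖ := (g m).le_opNorm (x n)
      _ ≤ ‖g m‖ * 1 := mul_le_mul_of_nonneg_left (hx n) (norm_nonneg _)
      _ = ‖g m‖ := mul_one _
    exact abs_le.mp h1
  obtain ⟨L, _, φ, hφ, hconv⟩ := hS hmem
  rw [tendsto_pi_nhds] at hconv
  have hdist : ∀ (f h : X →L[ℝ] ℝ) (n : ℕ), dist (f (x n)) (h (x n)) ≤ dist f h := by
    intro f h n
    rw [dist_eq_norm, dist_eq_norm]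
    calc ‖f (x n) - h (x n)‖ = ‖(f - h) (x n)‖ := by
          rw [ContinuousLinearMap.sub_apply]
    _ ≤ ‖f - h‖ * ‖x n‖ := (f - h).le_opNorm (x n)
    _ ≤ ‖f - h‖ * 1 := mul_le_mul_of_nonneg_left (hx n) (norm_nonneg _)
    _ = ‖f - h‖ := mul_one _
  have hC : ∀ f : X →L[ℝ] ℝ, ∃ l : ℝ, Tendsto (fun k => f (x (φ k))) atTop (𝓝 l) := by
    intro f
    apply cauchySeq_tendsto_of_complete
    rw [Metric.cauchySeq_iff]
    intro ε hε
    obtain ⟨m, hm⟩ := hg.exists_dist_lt f (show (0:ℝ) < ε/4 by linarith)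
    obtain ⟨N, hN⟩ := Metric.cauchySeq_iff.mp (hconv m).cauchySeq (ε/4) (by linarith)
    refine ⟨N, fun a ha b hb => ?_⟩
    have h1 := hdist f (g m) (φ a)
    have h2 := hdist (g m) f (φ b)
    have h3 : dist (g m (x (φ a))) (g m (x (φ b))) < ε/4 := by simpa using hN a ha b hb
    calc dist (f (x (φ a))) (f (x (φ b)))
        ≤ dist (f (x (φ a))) (g m (x (φ a))) + dist (g m (x (φ a))) (f (x (φ b))) :=
          dist_triangle _ _ _
    _ ≤ dist (f (x (φ a))) (g m (x (φ a))) + (dist (g m (x (φ a))) (g m (x (φ b)))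
          + dist (g m (x (φ b))) (f (x (φ b)))) := by
          linarith [dist_triangle (g m (x (φ a))) (g m (x (φ b))) (f (x (φ b)))]
    _ < ε := by
          have h4 : dist (g m) f = dist f (g m) := dist_comm _ _
          linarith [h1, h2, h3, hm, h4 ▸ h2]
  choose l hl using hC
  have ladd : ∀ f h : X →L[ℝ] ℝ, l (f + h) = l f + l h := by
    intro f h
    refine tendsto_nhds_unique (hl (f + h)) ?_
    simpa [ContinuousLinearMap.add_apply] using (hl f).add (hl h)
  have lsmul : ∀ (c : ℝ) (f : X →L[ℝ] ℝ), l (c • f) = c * l f := by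
    intro c f
    refine tendsto_nhds_unique (hl (c • f)) ?_
    simpa [ContinuousLinearMap.smul_apply, smul_eq_mul] using (hl f).const_mul c
  have lbound : ∀ f : X →L[ℝ] ℝ, ‖l f‖ ≤ 1 * ‖f‖ := by
    intro f
    rw [one_mul]
    refine le_of_tendsto (hl f).norm (Eventually.of_forall fun k => ?_)
    calc ‖f (x (φ k))‖ ≤ ‖f‖ * ‖x (φ k)‖ := f.le_opNorm _
    _ ≤ ‖f‖ * 1 := mul_le_mul_of_nonneg_left (hx _) (norm_nonneg _)
    _ = ‖f‖ := mul_one _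
  set F : (X →L[ℝ] ℝ) →L[ℝ] ℝ :=
    LinearMap.mkContinuous
      { toFun := l
        map_add' := ladd
        map_smul' := lsmul } 1 lbound with hFdef
  obtain ⟨x₀, hx₀⟩ := hrefl F
  refine ⟨φ, x₀, hφ, fun f => ?_⟩
  have hfx : f x₀ = F f := by rw [← hx₀]; rfl
  rw [Function.comp_def, hfx]
  exact hl f

theorem stmt5 {X : Type*} [NormedAddCommGroup X] [NormedSpace ℝ X] [CompleteSpace X]
    [TopologicalSpace.SeparableSpace X]
    (hrefl : Function.Surjective (NormedSpace.inclusionInDoubleDual ℝ X))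
    {p : ℝ} (hp : 1 < p) (hmp : PropertyMp (X := X) p)
    (K : ℕ → X →L[ℝ] X) (hKcpt : ∀ n, IsCompactOperator (K n))
    (hKnorm : ∀ n, ‖K n‖ ≤ 1)
    (hIK : Tendsto (fun n => ‖(ContinuousLinearMap.id ℝ X) - K n‖) atTop (𝓝 1))
    (hpt : ∀ x : X, Tendsto (fun n => ‖x - K n x‖) atTop (𝓝 0))
    (T : X →L[ℝ] X) (hT : T ≠ 0)
    (hmin : ∀ x₀ : X, WeakClusterPtOfMaximizing T x₀ → ‖x₀‖ = 1) :
    essNorm T < ‖T‖ := by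
  by_contra hcon
  push_neg at hcon
  have hp0 : (0:ℝ) < p := lt_trans one_pos hp
  have hT0 : (0:ℝ) < ‖T‖ := norm_pos_iff.mpr hT
  -- the dual of X is separable
  haveI hsep2 : TopologicalSpace.SeparableSpace
      (StrongDual ℝ (StrongDual ℝ X)) :=
    (hrefl.denseRange).separableSpace (NormedSpace.inclusionInDoubleDual ℝ X).continuous
  haveI hsep : TopologicalSpace.SeparableSpace (X →L[ℝ] ℝ) :=
    stmt5_separable_of_dual_separable (E := X →L[ℝ] ℝ)
  -- essential-norm lower bound on T(I - Kₙ)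
  have hlow : ∀ n, ‖T‖ ≤ ‖T - T.comp (K n)‖ := by
    intro n
    refine hcon.trans (csInf_le ⟨0, ?_⟩ ⟨T.comp (K n), ?_, rfl⟩)
    · rintro c ⟨K', _, rfl⟩
      exact norm_nonneg _
    · have := (hKcpt n).clm_comp T
      simpa [ContinuousLinearMap.coe_comp] using this
  set δ : ℕ → ℝ := fun n => ((n:ℝ)+2)⁻¹ with hδdef
  have hδpos : ∀ n, 0 < δ n := fun n => by positivity
  have hδle : ∀ n, δ n ≤ 1/2 := by
    intro n
    rw [hδdef]
    simp only
    rw [inv_le_iff_one_le_mul₀ (by positivity)]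
    have : (0:ℝ) ≤ (n:ℝ) := Nat.cast_nonneg n
    nlinarith
  have hδ0 : Tendsto δ atTop (𝓝 0) := by
    apply Tendsto.inv_tendsto_atTop
    exact tendsto_atTop_add_const_right atTop 2 tendsto_natCast_atTop_atTop
  -- choose nearly-maximizing vectors for T(I - Kₙ)
  have hy : ∀ n, ∃ y : X, ‖y‖ ≤ 1 ∧ ‖T‖ * (1 - δ n) < ‖T (y - K n y)‖ := by
    intro n
    have h1 : ‖T‖ * (1 - δ n) < ‖T - T.comp (K n)‖ := by
      refine lt_of_lt_of_le ?_ (hlow n)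
      nlinarith [hδpos n]
    obtain ⟨y, hy1, hy2⟩ := (T - T.comp (K n)).exists_lt_apply_of_lt_opNorm h1
    refine ⟨y, hy1.le, ?_⟩
    have e : (T - T.comp (K n)) y = T (y - K n y) := by
      rw [ContinuousLinearMap.sub_apply, ContinuousLinearMap.comp_apply, map_sub]
    rwa [e] at hy2
  choose y hy1 hy2 using hy
  set w : ℕ → X := fun n => y n - K n (y n) with hwdef
  have hTw_pos : ∀ n, 0 < ‖T (w n)‖ := by
    intro n
    refine lt_of_le_of_lt ?_ (hy2 n)
    have := hδle n
    nlinarith [hT0]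
  have hwn_pos : ∀ n, 0 < ‖w n‖ := by
    intro n
    rw [norm_pos_iff]
    intro h
    have h2 := hTw_pos n
    rw [h, map_zero, norm_zero] at h2
    exact lt_irrefl _ h2
  have hw_ub : ∀ n, ‖w n‖ ≤ ‖ContinuousLinearMap.id ℝ X - K n‖ * ‖y n‖ := by
    intro n
    have := (ContinuousLinearMap.id ℝ X - K n).le_opNorm (y n)
    simpa [ContinuousLinearMap.sub_apply] using this
  have hw_ub' : ∀ n, ‖w n‖ ≤ ‖ContinuousLinearMap.id ℝ X - K n‖ := by
    intro n
    refine (hw_ub n).trans ?_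
    calc ‖ContinuousLinearMap.id ℝ X - K n‖ * ‖y n‖
        ≤ ‖ContinuousLinearMap.id ℝ X - K n‖ * 1 :=
          mul_le_mul_of_nonneg_left (hy1 n) (norm_nonneg _)
    _ = _ := mul_one _
  have hw_lb : ∀ n, 1 - δ n ≤ ‖w n‖ := by
    intro n
    have h2 : ‖T (w n)‖ ≤ ‖T‖ * ‖w n‖ := T.le_opNorm _
    nlinarith [hy2 n, hT0]
  have hwlim : Tendsto (fun n => ‖w n‖) atTop (𝓝 1) := by
    have hl : Tendsto (fun n => 1 - δ n) atTop (𝓝 1) := by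
      simpa using (tendsto_const_nhds (x := (1:ℝ))).sub hδ0
    exact tendsto_of_tendsto_of_tendsto_of_le_of_le hl hIK hw_lb hw_ub'
  have hTwlim : Tendsto (fun n => ‖T (w n)‖) atTop (𝓝 ‖T‖) := by
    have hl : Tendsto (fun n => ‖T‖ * (1 - δ n)) atTop (𝓝 ‖T‖) := by
      have := ((tendsto_const_nhds (x := ‖T‖)).mul
        ((tendsto_const_nhds (x := (1:ℝ))).sub hδ0))
      simpa using this
    have hu : Tendsto (fun n => ‖T‖ * ‖w n‖) atTop (𝓝 ‖T‖) := by
      have := (tendsto_const_nhds (x := ‖T‖)).mul hwlim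
      simpa using this
    exact tendsto_of_tendsto_of_tendsto_of_le_of_le hl hu
      (fun n => (hy2 n).le) (fun n => T.le_opNorm _)
  have hylim : Tendsto (fun n => ‖y n‖) atTop (𝓝 1) := by
    have hev : ∀ᶠ n in atTop, (0:ℝ) < ‖ContinuousLinearMap.id ℝ X - K n‖ :=
      hIK.eventually (eventually_gt_nhds one_pos)
    have hl : Tendsto (fun n => ‖w n‖ / ‖ContinuousLinearMap.id ℝ X - K n‖)
        atTop (𝓝 1) := by
      have := hwlim.div hIK one_ne_zero
      rw [div_one] at this; exact this
    refine tendsto_of_tendsto_of_tendsto_of_le_of_le' hl tendsto_const_nhds ?_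
      (Eventually.of_forall hy1)
    filter_upwards [hev] with n hn
    rw [div_le_iff₀ hn]
    calc ‖w n‖ ≤ ‖ContinuousLinearMap.id ℝ X - K n‖ * ‖y n‖ := hw_ub n
    _ = ‖y n‖ * ‖ContinuousLinearMap.id ℝ X - K n‖ := mul_comm _ _
  -- the maximizing sequence z
  set z : ℕ → X := fun n => ‖w n‖⁻¹ • w n with hzdef
  have hz1 : ∀ n, ‖z n‖ = 1 := by
    intro n
    rw [hzdef]
    simp only
    rw [norm_smul, norm_inv, norm_norm, inv_mul_cancel₀ (hwn_pos n).ne']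
  have hzmax : Tendsto (fun n => ‖T (z n)‖) atTop (𝓝 ‖T‖) := by
    have he : ∀ n, ‖T (z n)‖ = ‖w n‖⁻¹ * ‖T (w n)‖ := by
      intro n
      rw [hzdef]
      simp only
      rw [map_smul, norm_smul, norm_inv, norm_norm]
    simp only [he]
    have := (hwlim.inv₀ one_ne_zero).mul hTwlim
    simpa using this
  have hzMax : MaximizingSeq T z := ⟨hz1, hzmax⟩
  -- extraction of weak limits
  obtain ⟨φ₁, ystar, hφ₁, hystar1⟩ := stmt5_weak_bw hrefl y hy1
  obtain ⟨φ₂, x₀, hφ₂, hx₀w⟩ := stmt5_weak_bw hrefl (z ∘ φ₁) (fun k => (hz1 _).le)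
  set φ : ℕ → ℕ := φ₁ ∘ φ₂ with hφdef
  have hφ : StrictMono φ := hφ₁.comp hφ₂
  have hzx₀ : WeakTendsto (z ∘ φ) x₀ := hx₀w
  have hyystar : WeakTendsto (y ∘ φ) ystar := by
    intro f
    exact (hystar1 f).comp hφ₂.tendsto_atTop
  -- ‖x₀‖ = 1
  have hx₀1 : ‖x₀‖ = 1 := hmin x₀ ⟨z, hzMax, φ, hφ, hzx₀⟩
  -- strong convergence of z ∘ φ
  have hc : WeakTendsto (fun k => z (φ k) - x₀) 0 := by
    intro f
    have := (hzx₀ f).sub_const (f x₀)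
    simpa [map_sub] using this
  have hkey := hmp _ hc x₀
  have hzlimsup : limsup (fun k => ‖z (φ k) - x₀‖ ^ p) atTop = 0 := by
    have h1 : (fun k => ‖(z (φ k) - x₀) + x₀‖ ^ p) = fun _ => (1:ℝ) := by
      funext k
      rw [sub_add_cancel, hz1, Real.one_rpow]
    rw [h1, limsup_const, hx₀1, Real.one_rpow] at hkey
    linarith
  have hzs : Tendsto (fun k => ‖z (φ k) - x₀‖) atTop (𝓝 0) := by
    refine stmt5_tendsto_zero_of_limsup_rpow hp0 (fun k => norm_nonneg _)
      (B := 2) (fun k => ?_) hzlimsup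
    calc ‖z (φ k) - x₀‖ ≤ ‖z (φ k)‖ + ‖x₀‖ := norm_sub_le _ _
    _ = 2 := by rw [hz1, hx₀1]; norm_num
  have hzs' : Tendsto (fun k => z (φ k)) atTop (𝓝 x₀) := by
    rw [tendsto_iff_norm_sub_tendsto_zero]
    exact hzs
  have hws : Tendsto (fun k => w (φ k)) atTop (𝓝 x₀) := by
    have he : ∀ k, w (φ k) = ‖w (φ k)‖ • z (φ k) := by
      intro k
      rw [hzdef]
      simp only
      rw [smul_smul, mul_inv_cancel₀ (hwn_pos (φ k)).ne', one_smul]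
    rw [show (fun k => w (φ k)) = fun k => ‖w (φ k)‖ • z (φ k) from funext he]
    have := (hwlim.comp hφ.tendsto_atTop).smul hzs'
    simpa using this
  -- the weak limit of y∘φ is 0
  have hu0 : WeakTendsto (fun k => y (φ k) - ystar) 0 := by
    intro f
    have := (hyystar f).sub_const (f ystar)
    simpa [map_sub, Function.comp] using this
  have hIKφ : Tendsto (fun k => ‖ContinuousLinearMap.id ℝ X - K (φ k)‖) atTop (𝓝 1) :=
    hIK.comp hφ.tendsto_atTop
  have hIKu : Tendsto (fun k => (y (φ k) - ystar) - K (φ k) (y (φ k) - ystar))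
      atTop (𝓝 x₀) := by
    have he : ∀ k, (y (φ k) - ystar) - K (φ k) (y (φ k) - ystar)
        = w (φ k) - (ystar - K (φ k) ystar) := by
      intro k
      rw [hwdef]
      simp only [map_sub]
      abel
    simp only [he]
    have h2 : Tendsto (fun k => ystar - K (φ k) ystar) atTop (𝓝 0) := by
      rw [tendsto_zero_iff_norm_tendsto_zero]
      exact (hpt ystar).comp hφ.tendsto_atTop
    simpa using hws.sub h2
  have hnIKu : Tendsto (fun k => ‖(y (φ k) - ystar) - K (φ k) (y (φ k) - ystar)‖)
      atTop (𝓝 1) := by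
    have := hIKu.norm
    rwa [hx₀1] at this
  have hub : ∀ k, ‖y (φ k) - ystar‖ ^ p ≤ (1 + ‖ystar‖) ^ p := by
    intro k
    apply Real.rpow_le_rpow (norm_nonneg _) _ hp0.le
    calc ‖y (φ k) - ystar‖ ≤ ‖y (φ k)‖ + ‖ystar‖ := norm_sub_le _ _
    _ ≤ 1 + ‖ystar‖ := by linarith [hy1 (φ k)]
  have hblim : Tendsto (fun k =>
      (‖(y (φ k) - ystar) - K (φ k) (y (φ k) - ystar)‖
        / ‖ContinuousLinearMap.id ℝ X - K (φ k)‖) ^ p) atTop (𝓝 1) := by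
    have h1 := hnIKu.div hIKφ one_ne_zero
    have h2 := h1.rpow_const (p := p) (Or.inl (by norm_num))
    simpa using h2
  have h1le : (1:ℝ) ≤ limsup (fun k => ‖y (φ k) - ystar‖ ^ p) atTop := by
    refine stmt5_le_limsup ?_ hblim hub
    filter_upwards [hIKφ.eventually (eventually_gt_nhds one_pos)] with k hk
    apply Real.rpow_le_rpow (by positivity) _ hp0.le
    rw [div_le_iff₀ hk]
    have := (ContinuousLinearMap.id ℝ X - K (φ k)).le_opNorm (y (φ k) - ystar)
    simp only [ContinuousLinearMap.sub_apply, ContinuousLinearMap.id_apply] at this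
    calc ‖(y (φ k) - ystar) - K (φ k) (y (φ k) - ystar)‖
        ≤ ‖ContinuousLinearMap.id ℝ X - K (φ k)‖ * ‖y (φ k) - ystar‖ := this
    _ = ‖y (φ k) - ystar‖ * ‖ContinuousLinearMap.id ℝ X - K (φ k)‖ := mul_comm _ _
  have hkey2 := hmp _ hu0 ystar
  have hyplim : Tendsto (fun k => ‖y (φ k)‖ ^ p) atTop (𝓝 1) := by
    have h1 := (hylim.comp hφ.tendsto_atTop).rpow_const (p := p) (Or.inl one_ne_zero)
    simpa using h1
  have hrw : (fun k => ‖(y (φ k) - ystar) + ystar‖ ^ p) = fun k => ‖y (φ k)‖ ^ p := by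
    funext k
    rw [sub_add_cancel]
  rw [hrw, hyplim.limsup_eq] at hkey2
  have hystar0 : ystar = 0 := by
    have h2 : ‖ystar‖ ^ p ≤ 0 := by linarith
    by_contra hne
    have : (0:ℝ) < ‖ystar‖ ^ p :=
      Real.rpow_pos_of_pos (norm_pos_iff.mpr hne) p
    linarith
  rw [hystar0] at hyystar
  -- final step : K (φ k) (y (φ k)) → -x₀ strongly, hence y (φ k) → 0
  have hKyw : ∀ k, K (φ k) (y (φ k)) = y (φ k) - w (φ k) := by
    intro k
    rw [hwdef]
    simp only
    abel
  have hc2 : WeakTendsto (fun k => K (φ k) (y (φ k)) + x₀) 0 := by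
    intro f
    have h1 : Tendsto (fun k => f (y (φ k))) atTop (𝓝 0) := by
      have := hyystar f
      simpa [map_zero, Function.comp] using this
    have h2 : Tendsto (fun k => f (w (φ k))) atTop (𝓝 (f x₀)) :=
      (f.continuous.tendsto x₀).comp hws
    have h3 := (h1.sub h2).add (tendsto_const_nhds (x := f x₀))
    have he : ∀ k, f (y (φ k)) - f (w (φ k)) + f x₀
        = f (K (φ k) (y (φ k)) + x₀) := by
      intro k
      simp only [map_add, map_sub, hKyw]
    simp only [he] at h3
    simpa [map_zero] using h3
  have hkey3 := hmp _ hc2 (-x₀)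
  have hrw3 : (fun k => ‖(K (φ k) (y (φ k)) + x₀) + -x₀‖ ^ p)
      = fun k => ‖K (φ k) (y (φ k))‖ ^ p := by
    funext k
    rw [add_neg_cancel_right]
  rw [hrw3, norm_neg, hx₀1, Real.one_rpow] at hkey3
  have hKyle : ∀ k, ‖K (φ k) (y (φ k))‖ ^ p ≤ 1 := by
    intro k
    apply Real.rpow_le_one (norm_nonneg _) _ hp0.le
    calc ‖K (φ k) (y (φ k))‖ ≤ ‖K (φ k)‖ * ‖y (φ k)‖ := (K (φ k)).le_opNorm _
    _ ≤ 1 * 1 := mul_le_mul (hKnorm _) (hy1 _) (norm_nonneg _) zero_le_one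
    _ = 1 := mul_one _
  have hlhs_le : limsup (fun k => ‖K (φ k) (y (φ k))‖ ^ p) atTop ≤ 1 :=
    stmt5_limsup_le (Eventually.of_forall hKyle)
      (fun k => Real.rpow_nonneg (norm_nonneg _) p)
  have hc2bd : ∀ k, ‖K (φ k) (y (φ k)) + x₀‖ ^ p ≤ (1 + ‖x₀‖) ^ p := by
    intro k
    apply Real.rpow_le_rpow (norm_nonneg _) _ hp0.le
    calc ‖K (φ k) (y (φ k)) + x₀‖ ≤ ‖K (φ k) (y (φ k))‖ + ‖x₀‖ := norm_add_le _ _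
    _ ≤ 1 + ‖x₀‖ := by
        have h1 : ‖K (φ k) (y (φ k))‖ ≤ 1 := by
          calc ‖K (φ k) (y (φ k))‖ ≤ ‖K (φ k)‖ * ‖y (φ k)‖ := (K (φ k)).le_opNorm _
          _ ≤ 1 * 1 := mul_le_mul (hKnorm _) (hy1 _) (norm_nonneg _) zero_le_one
          _ = 1 := mul_one _
        linarith
  have h0le : (0:ℝ) ≤ limsup (fun k => ‖K (φ k) (y (φ k)) + x₀‖ ^ p) atTop :=
    stmt5_le_limsup (v := fun _ => (0:ℝ))
      (Eventually.of_forall fun k => Real.rpow_nonneg (norm_nonneg _) p)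
      tendsto_const_nhds hc2bd
  have hc2limsup : limsup (fun k => ‖K (φ k) (y (φ k)) + x₀‖ ^ p) atTop = 0 := by
    linarith
  have hc2s : Tendsto (fun k => ‖K (φ k) (y (φ k)) + x₀‖) atTop (𝓝 0) := by
    refine stmt5_tendsto_zero_of_limsup_rpow hp0 (fun k => norm_nonneg _)
      (B := 1 + ‖x₀‖) (fun k => ?_) hc2limsup
    calc ‖K (φ k) (y (φ k)) + x₀‖ ≤ ‖K (φ k) (y (φ k))‖ + ‖x₀‖ := norm_add_le _ _
    _ ≤ 1 + ‖x₀‖ := by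
        have h1 : ‖K (φ k) (y (φ k))‖ ≤ 1 := by
          calc ‖K (φ k) (y (φ k))‖ ≤ ‖K (φ k)‖ * ‖y (φ k)‖ := (K (φ k)).le_opNorm _
          _ ≤ 1 * 1 := mul_le_mul (hKnorm _) (hy1 _) (norm_nonneg _) zero_le_one
          _ = 1 := mul_one _
        linarith
  have hc2v : Tendsto (fun k => K (φ k) (y (φ k)) + x₀) atTop (𝓝 0) := by
    rw [tendsto_zero_iff_norm_tendsto_zero]
    exact hc2s
  have hyto0 : Tendsto (fun k => y (φ k)) atTop (𝓝 0) := by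
    have he : ∀ k, y (φ k) = w (φ k) + ((K (φ k) (y (φ k)) + x₀) + -x₀) := by
      intro k
      rw [hKyw]
      abel
    rw [show (fun k => y (φ k))
      = fun k => w (φ k) + ((K (φ k) (y (φ k)) + x₀) + -x₀) from funext he]
    have := hws.add (hc2v.add (tendsto_const_nhds (x := -x₀)))
    simpa using this
  have hfin : Tendsto (fun k => ‖y (φ k)‖) atTop (𝓝 0) := by
    have := hyto0.norm
    simpa using this
  have hfin1 : Tendsto (fun k => ‖y (φ k)‖) atTop (𝓝 1) := hylim.comp hφ.tendsto_atTop
  exact one_ne_zero (tendsto_nhds_unique hfin1 hfin)
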